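/- In the 2-player WLC game G(Z_3) with C_1 = {a_1,b_1,c_1}, C_2 = {a_2,b_2,c_2}, W = {(a_1,a_2),(b_1,a_2),(b_1,b_2),(c_1,b_2),(c_1,c_2)}, choice b_1 weakly dominates a_1 and b_2 weakly dominates c_2; moreover, in the restricted game on ({b_1,c_1}, {a_2,b_2}), b_1 weakly dominates c_1 and b_2 weakly dominates a_2, and (b_1, b_2) ∈ W; hence G(Z_3) is solvable by two iterations of simultaneous elimination of weakly dominated choices (CRC) but not by one (IRC). -/

import Mathlib

open Classical

/-- An `n`-player win-lose coordination (WLC) game: a finite domain of choices,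
nonempty pairwise disjoint choice sets `C i` for the players, and a winning
relation `W` consisting of choice profiles. -/
structure WLC (n : ℕ) where
  A : Type
  finA : Finite A
  C : Fin n → Set A
  C_nonempty : ∀ i, (C i).Nonempty
  C_disjoint : ∀ i j, i ≠ j → Disjoint (C i) (C j)
  W : Set (Fin n → A)
  W_sub : ∀ σ ∈ W, ∀ i, σ i ∈ C i

namespace WLC

variable {n : ℕ}

/-- `σ` is a choice profile w.r.t. the choice sets `Cs`. -/
def IsProfileOn {A : Type} (Cs : Fin n → Set A) (σ : Fin n → A) : Prop :=
  ∀ i, σ i ∈ Cs i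

/-- `c` is a surely winning choice of player `i` w.r.t. choice sets `Cs`
and winning relation `W`. -/
def SWinOn {A : Type} (Cs : Fin n → Set A) (W : Set (Fin n → A)) (i : Fin n) (c : A) : Prop :=
  c ∈ Cs i ∧ ∀ σ, IsProfileOn Cs σ → σ i = c → σ ∈ W

/-- `c` is a surely losing choice of player `i` w.r.t. choice sets `Cs`
and winning relation `W`. -/
def SLoseOn {A : Type} (Cs : Fin n → Set A) (W : Set (Fin n → A)) (i : Fin n) (c : A) : Prop :=
  c ∈ Cs i ∧ ∀ σ, IsProfileOn Cs σ → σ i = c → σ ∉ W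

def IsProfile (G : WLC n) (σ : Fin n → G.A) : Prop := IsProfileOn G.C σ

def SurelyWinning (G : WLC n) (i : Fin n) (c : G.A) : Prop := SWinOn G.C G.W i c

def SurelyLosing (G : WLC n) (i : Fin n) (c : G.A) : Prop := SLoseOn G.C G.W i c

/-- The winning extension of the choice `c` of player `i`: the (sets of) tuples of
choices of the other players that complete `c` to a winning profile.  (Technically we
use full profiles whose `i`-th coordinate is irrelevant, replacing it by `c`.) -/
def winExtOn {A : Type} (Cs : Fin n → Set A) (W : Set (Fin n → A)) (i : Fin n) (c : A) :
    Set (Fin n → A) :=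
  {σ | (∀ j, j ≠ i → σ j ∈ Cs j) ∧ Function.update σ i c ∈ W}

def winExt (G : WLC n) (i : Fin n) (c : G.A) : Set (Fin n → G.A) := winExtOn G.C G.W i c

end WLC

namespace WLC

variable {n : ℕ}

/-- `c` is better than (weakly dominates) `c'` for player `i`, w.r.t. choice sets `Cs`
and winning relation `W`: the winning extension of `c'` is a proper subset of that
of `c`. -/
def BetterOn {A : Type} (Cs : Fin n → Set A) (W : Set (Fin n → A)) (i : Fin n)
    (c c' : A) : Prop :=
  winExtOn Cs W i c' ⊂ winExtOn Cs W i c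

/-- The first stage of simultaneous elimination of weakly dominated choices. -/
def ndset1 (G : WLC n) (i : Fin n) : Set G.A :=
  {c ∈ G.C i | ¬ ∃ c' ∈ G.C i, BetterOn G.C G.W i c' c}

/-- The second stage of simultaneous elimination of weakly dominated choices. -/
def ndset2 (G : WLC n) (i : Fin n) : Set G.A :=
  {c ∈ ndset1 G i | ¬ ∃ c' ∈ ndset1 G i, BetterOn (ndset1 G) G.W i c' c}

end WLC

open WLC

/-- The game `G(Z₃)`: choices `a₁ = (0,0)`, `b₁ = (0,1)`, `c₁ = (0,2)`,
`a₂ = (1,0)`, `b₂ = (1,1)`, `c₂ = (1,2)`;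
`W = {(a₁,a₂), (b₁,a₂), (b₁,b₂), (c₁,b₂), (c₁,c₂)}`. -/
def GZ3 : WLC 2 where
  A := Fin 2 × Fin 3
  finA := inferInstance
  C := fun i => {a | a.1 = i}
  C_nonempty := fun i => ⟨(i, 0), rfl⟩
  C_disjoint := fun i j h => Set.disjoint_left.mpr fun a ha hb => h (ha.symm.trans hb)
  W := {σ | (σ 0 = (0,0) ∧ σ 1 = (1,0)) ∨ (σ 0 = (0,1) ∧ σ 1 = (1,0)) ∨
            (σ 0 = (0,1) ∧ σ 1 = (1,1)) ∨ (σ 0 = (0,2) ∧ σ 1 = (1,1)) ∨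
            (σ 0 = (0,2) ∧ σ 1 = (1,2))}
  W_sub := by
    rintro σ (⟨h0, h1⟩ | ⟨h0, h1⟩ | ⟨h0, h1⟩ | ⟨h0, h1⟩ | ⟨h0, h1⟩) i <;> fin_cases i <;>
      simp [Set.mem_setOf_eq, h0, h1]

lemma mem_ext0 (Cs : Fin 2 → Set (Fin 2 × Fin 3)) (c : Fin 2 × Fin 3) (σ : Fin 2 → Fin 2 × Fin 3) :
    σ ∈ winExtOn Cs GZ3.W 0 c ↔ (σ 1 ∈ Cs 1 ∧
      ((c = (0,0) ∧ σ 1 = (1,0)) ∨ (c = (0,1) ∧ σ 1 = (1,0)) ∨ (c = (0,1) ∧ σ 1 = (1,1)) ∨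
       (c = (0,2) ∧ σ 1 = (1,1)) ∨ (c = (0,2) ∧ σ 1 = (1,2)))) := by
  simp [winExtOn, GZ3, Fin.forall_fin_two, Function.update]

lemma mem_ext1 (Cs : Fin 2 → Set (Fin 2 × Fin 3)) (c : Fin 2 × Fin 3) (σ : Fin 2 → Fin 2 × Fin 3) :
    σ ∈ winExtOn Cs GZ3.W 1 c ↔ (σ 0 ∈ Cs 0 ∧
      ((σ 0 = (0,0) ∧ c = (1,0)) ∨ (σ 0 = (0,1) ∧ c = (1,0)) ∨ (σ 0 = (0,1) ∧ c = (1,1)) ∨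
       (σ 0 = (0,2) ∧ c = (1,1)) ∨ (σ 0 = (0,2) ∧ c = (1,2)))) := by
  simp [winExtOn, GZ3, Fin.forall_fin_two, Function.update, Set.mem_setOf_eq, Fin.ext_iff]

lemma not_better_of_mem {A : Type} {Cs : Fin 2 → Set A} {W : Set (Fin 2 → A)} {i : Fin 2}
    {c c' : A} (τ : Fin 2 → A) (h1 : τ ∈ winExtOn Cs W i c) (h2 : τ ∉ winExtOn Cs W i c') :
    ¬ BetterOn Cs W i c' c := fun hb => h2 (hb.1 h1)
/-- In `G(Z₃)`, `b₁` weakly dominates `a₁` and `b₂` weakly dominates `c₂`;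
the sets remaining after one round of simultaneous elimination of weakly dominated
choices are `{b₁,c₁}` and `{a₂,b₂}`; in the restricted game `b₁` weakly dominates `c₁`
and `b₂` weakly dominates `a₂`, and `(b₁,b₂) ∈ W`; hence `G(Z₃)` is solvable by two
iterations of simultaneous elimination of weakly dominated choices (CRC) but not by
one (IRC). -/
theorem GZ3_crc_solvable_not_irc_solvable :
    BetterOn GZ3.C GZ3.W 0 (0,1) (0,0) ∧
    BetterOn GZ3.C GZ3.W 1 (1,1) (1,2) ∧
    ndset1 GZ3 0 = {(0,1), (0,2)} ∧
    ndset1 GZ3 1 = {(1,0), (1,1)} ∧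
    BetterOn (ndset1 GZ3) GZ3.W 0 (0,1) (0,2) ∧
    BetterOn (ndset1 GZ3) GZ3.W 1 (1,1) (1,0) ∧
    ![((0,1) : Fin 2 × Fin 3), (1,1)] ∈ GZ3.W ∧
    (∀ σ, (∀ i, σ i ∈ ndset2 GZ3 i) → σ ∈ GZ3.W) ∧
    ¬ (∀ σ, (∀ i, σ i ∈ ndset1 GZ3 i) → σ ∈ GZ3.W) := by
  have h1 : BetterOn GZ3.C GZ3.W 0 (0,1) (0,0) := by
    constructor
    · intro σ h
      erw [mem_ext0] at h ⊢
      rcases h with ⟨hm, h⟩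
      refine ⟨hm, ?_⟩
      rcases h with ⟨_, h⟩ | ⟨h, _⟩ | ⟨h, _⟩ | ⟨h, _⟩ | ⟨h, _⟩
      · exact Or.inr (Or.inl ⟨rfl, h⟩)
      all_goals exact absurd h (by decide)
    · intro hsub
      have := hsub (show ![(0,0),(1,1)] ∈ winExtOn GZ3.C GZ3.W 0 (0,1) by
        erw [mem_ext0]; simp [GZ3] <;> decide)
      erw [mem_ext0] at this
      rcases this with ⟨_, this⟩
      revert this; decide
  have h2 : BetterOn GZ3.C GZ3.W 1 (1,1) (1,2) := by
    constructor
    · intro σ h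
      erw [mem_ext1] at h ⊢
      rcases h with ⟨hm, h⟩
      refine ⟨hm, ?_⟩
      rcases h with ⟨_, h⟩ | ⟨_, h⟩ | ⟨_, h⟩ | ⟨h', h⟩ | ⟨h', h⟩
      · exact absurd h (by decide)
      · exact absurd h (by decide)
      · exact absurd h (by decide)
      · exact absurd h (by decide)
      · exact Or.inr (Or.inr (Or.inr (Or.inl ⟨h', by decide⟩)))
    · intro hsub
      have := hsub (show ![(0,1),(1,0)] ∈ winExtOn GZ3.C GZ3.W 1 (1,1) by
        erw [mem_ext1]; simp [GZ3] <;> decide)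
      erw [mem_ext1] at this
      rcases this with ⟨_, this⟩
      revert this; decide
  have h3 : ndset1 GZ3 0 = {(0,1), (0,2)} := by
    ext x
    constructor
    · rintro ⟨hx, hnd⟩
      obtain ⟨x1, x2⟩ := x
      have hx' : x1 = 0 := hx
      subst hx'
      fin_cases x2
      · exact absurd ⟨(0,1), rfl, h1⟩ hnd
      · exact Or.inl rfl
      · exact Or.inr rfl
    · rintro (rfl | rfl)
      · refine ⟨rfl, ?_⟩
        rintro ⟨⟨u1, u2⟩, hu, hb⟩
        have hu' : u1 = 0 := hu
        subst hu'
        fin_cases u2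
        · exact not_better_of_mem ![(0,0),(1,1)]
            (by erw [mem_ext0]; simp [GZ3] <;> decide)
            (by erw [mem_ext0]; simp [GZ3] <;> decide) hb
        · exact ssubset_irrefl _ hb
        · exact not_better_of_mem ![(0,0),(1,0)]
            (by erw [mem_ext0]; simp [GZ3] <;> decide)
            (by erw [mem_ext0]; simp [GZ3] <;> decide) hb
      · refine ⟨rfl, ?_⟩
        rintro ⟨⟨u1, u2⟩, hu, hb⟩
        have hu' : u1 = 0 := hu
        subst hu'
        fin_cases u2
        · exact not_better_of_mem ![(0,0),(1,2)]
            (by erw [mem_ext0]; simp [GZ3] <;> decide)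
            (by erw [mem_ext0]; simp [GZ3] <;> decide) hb
        · exact not_better_of_mem ![(0,0),(1,2)]
            (by erw [mem_ext0]; simp [GZ3] <;> decide)
            (by erw [mem_ext0]; simp [GZ3] <;> decide) hb
        · exact ssubset_irrefl _ hb
  have h4 : ndset1 GZ3 1 = {(1,0), (1,1)} := by
    ext x
    constructor
    · rintro ⟨hx, hnd⟩
      obtain ⟨x1, x2⟩ := x
      have hx' : x1 = 1 := hx
      subst hx'
      fin_cases x2
      · exact Or.inl rfl
      · exact Or.inr rfl
      · exact absurd ⟨(1,1), rfl, h2⟩ hnd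
    · rintro (rfl | rfl)
      · refine ⟨rfl, ?_⟩
        rintro ⟨⟨u1, u2⟩, hu, hb⟩
        have hu' : u1 = 1 := hu
        subst hu'
        fin_cases u2
        · exact ssubset_irrefl _ hb
        · exact not_better_of_mem ![(0,0),(1,0)]
            (by erw [mem_ext1]; simp [GZ3] <;> decide)
            (by erw [mem_ext1]; simp [GZ3] <;> decide) hb
        · exact not_better_of_mem ![(0,0),(1,0)]
            (by erw [mem_ext1]; simp [GZ3] <;> decide)
            (by erw [mem_ext1]; simp [GZ3] <;> decide) hb
      · refine ⟨rfl, ?_⟩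
        rintro ⟨⟨u1, u2⟩, hu, hb⟩
        have hu' : u1 = 1 := hu
        subst hu'
        fin_cases u2
        · exact not_better_of_mem ![(0,2),(1,0)]
            (by erw [mem_ext1]; simp [GZ3] <;> decide)
            (by erw [mem_ext1]; simp [GZ3] <;> decide) hb
        · exact ssubset_irrefl _ hb
        · exact not_better_of_mem ![(0,1),(1,0)]
            (by erw [mem_ext1]; simp [GZ3] <;> decide)
            (by erw [mem_ext1]; simp [GZ3] <;> decide) hb
  have hN0 : ∀ x : Fin 2 × Fin 3, x ∈ ndset1 GZ3 0 ↔ (x = (0,1) ∨ x = (0,2)) := by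
    intro x; rw [h3]; rfl
  have hN1 : ∀ x : Fin 2 × Fin 3, x ∈ ndset1 GZ3 1 ↔ (x = (1,0) ∨ x = (1,1)) := by
    intro x; rw [h4]; rfl
  have h5 : BetterOn (ndset1 GZ3) GZ3.W 0 (0,1) (0,2) := by
    constructor
    · intro σ h
      erw [mem_ext0] at h ⊢
      rcases h with ⟨hm, h⟩
      refine ⟨hm, ?_⟩
      erw [hN1] at hm
      rcases h with ⟨h, _⟩ | ⟨h, _⟩ | ⟨h, _⟩ | ⟨_, h'⟩ | ⟨_, h'⟩
      · exact absurd h (by decide)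
      · exact absurd h (by decide)
      · exact absurd h (by decide)
      · exact Or.inr (Or.inr (Or.inl ⟨rfl, h'⟩))
      · rw [h'] at hm; rcases hm with hm | hm <;> exact absurd hm (by decide)
    · intro hsub
      have := hsub (show ![(0,0),(1,0)] ∈ winExtOn (ndset1 GZ3) GZ3.W 0 (0,1) by
        erw [mem_ext0, hN1]; refine ⟨by decide, ?_⟩; decide)
      erw [mem_ext0] at this
      rcases this with ⟨_, this⟩
      revert this; decide
  have h6 : BetterOn (ndset1 GZ3) GZ3.W 1 (1,1) (1,0) := by
    constructor
    · intro σ h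
      erw [mem_ext1] at h ⊢
      rcases h with ⟨hm, h⟩
      refine ⟨hm, ?_⟩
      erw [hN0] at hm
      rcases h with ⟨h', h⟩ | ⟨h', h⟩ | ⟨h', h⟩ | ⟨h', h⟩ | ⟨h', h⟩
      · rw [h'] at hm; rcases hm with hm | hm <;> exact absurd hm (by decide)
      · exact Or.inr (Or.inr (Or.inl ⟨h', rfl⟩))
      · exact absurd h (by decide)
      · exact absurd h (by decide)
      · exact absurd h (by decide)
    · intro hsub
      have := hsub (show ![(0,2),(1,0)] ∈ winExtOn (ndset1 GZ3) GZ3.W 1 (1,1) by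
        erw [mem_ext1, hN0]; refine ⟨by decide, ?_⟩; decide)
      erw [mem_ext1] at this
      rcases this with ⟨_, this⟩
      revert this; decide
  have h7 : ![((0,1) : Fin 2 × Fin 3), (1,1)] ∈ GZ3.W := by
    refine Or.inr (Or.inr (Or.inl ⟨?_, ?_⟩)) <;> rfl
  refine ⟨h1, h2, h3, h4, h5, h6, h7, ?_, ?_⟩
  · intro σ hσ
    have hs0 := hσ 0
    have hs1 := hσ 1
    obtain ⟨hs0a, hs0b⟩ := hs0
    obtain ⟨hs1a, hs1b⟩ := hs1
    have e0 : σ 0 = (0,1) := by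
      rcases (hN0 _).mp hs0a with h | h
      · exact h
      · exact absurd ⟨(0,1), (hN0 _).mpr (Or.inl rfl), h ▸ h5⟩ hs0b
    have e1 : σ 1 = (1,1) := by
      rcases (hN1 _).mp hs1a with h | h
      · exact absurd ⟨(1,1), (hN1 _).mpr (Or.inr rfl), h ▸ h6⟩ hs1b
      · exact h
    exact Or.inr (Or.inr (Or.inl ⟨e0, e1⟩))
  · intro h
    have := h ![(0,2),(1,0)] (by
      intro i
      fin_cases i
      · exact (hN0 _).mpr (Or.inr rfl)
      · exact (hN1 _).mpr (Or.inl rfl))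
    revert this
    show ¬ (_ ∨ _ ∨ _ ∨ _ ∨ _)
    simp [Prod.ext_iff]
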